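/- arXiv:1904.02731 — 2 statements merged into one kernel-verified Lean document; each statement's English description precedes it below -/
import Mathlib

section
/- Let G be a finite group, H ≤ G a subgroup, x_1 = 1, x_2, …, x_s a complete set of representatives for the double cosets of H in G, and let V be an irreducible finite-dimensional complex representation of G whose character χ_V takes only rational values and which satisfies dim_ℂ V^H = 1. Then in ℂ[G]: p_H · e_V = (dim V / |G|) · ∑_{i=1}^s |H ∩ x_i H x_i⁻¹| · χ_V(q_i) · q_i, where q_i := (1/|H|) · ∑_{y ∈ Hx_iH} y. -/
open scoped Classical

/-- The averaging idempotent `p_H = (1/|H|) ∑_{h ∈ H} h` in the complex group algebra. -/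
noncomputable def avgIdemC {G : Type*} [Group G] [Fintype G] (H : Subgroup G) :
    MonoidAlgebra ℂ G :=
  (Nat.card H : ℂ)⁻¹ • ∑ h ∈ (H : Set G).toFinset, MonoidAlgebra.single h (1 : ℂ)

/-- The double coset `HxH` as a finset. -/
noncomputable def dosetFinset {G : Type*} [Group G] [Fintype G] (H : Subgroup G) (x : G) :
    Finset G :=
  {y : G | ∃ h ∈ H, ∃ h' ∈ H, y = h * x * h'}.toFinset

/-- `|H ∩ xHx⁻¹|`. -/
noncomputable def interConjCard {G : Type*} [Group G] [Fintype G] (H : Subgroup G) (x : G) :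
    ℕ :=
  Nat.card {g : G // g ∈ H ∧ ∃ h ∈ H, g = x * h * x⁻¹}

/-- The character of a finite-dimensional representation. -/
noncomputable def repChar {G V : Type*} [Group G] [AddCommGroup V] [Module ℂ V]
    (ρ : Representation ℂ G V) (g : G) : ℂ :=
  LinearMap.trace ℂ V (ρ g)

/-- Irreducibility: `V` is nonzero and has no proper nonzero `G`-invariant subspace. -/
def IsIrreducibleRep {G V : Type*} [Group G] [AddCommGroup V] [Module ℂ V]
    (ρ : Representation ℂ G V) : Prop :=
  Nontrivial V ∧ ∀ W : Submodule ℂ V, (∀ g : G, ∀ v ∈ W, ρ g v ∈ W) → W = ⊥ ∨ W = ⊤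

/-- The subspace `V^H` of `H`-fixed vectors. -/
def fixedSubmodule {G V : Type*} [Group G] [AddCommGroup V] [Module ℂ V]
    (ρ : Representation ℂ G V) (H : Subgroup G) : Submodule ℂ V where
  carrier := {v : V | ∀ h ∈ H, ρ h v = v}
  add_mem' := by
    intro a b ha hb h hh
    simp [map_add, ha h hh, hb h hh]
  zero_mem' := by
    intro h hh
    simp
  smul_mem' := by
    intro c v hv h hh
    simp [map_smul, hv h hh]

/-- The central idempotent `e_V = (dim V / |G|) ∑_{g} χ_V(g⁻¹) g` of `ℂ[G]`. -/
noncomputable def centralIdem {G V : Type*} [Group G] [Fintype G] [AddCommGroup V]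
    [Module ℂ V] (ρ : Representation ℂ G V) : MonoidAlgebra ℂ G :=
  ((Module.finrank ℂ V : ℂ) / (Fintype.card G : ℂ)) •
    ∑ g : G, repChar ρ g⁻¹ • MonoidAlgebra.single g (1 : ℂ)

/-- The Hecke algebra basis element `q_x = (1/|H|) ∑_{y ∈ HxH} y`. -/
noncomputable def heckeElt {G : Type*} [Group G] [Fintype G] (H : Subgroup G) (x : G) :
    MonoidAlgebra ℂ G :=
  (Nat.card H : ℂ)⁻¹ • ∑ y ∈ dosetFinset H x, MonoidAlgebra.single y (1 : ℂ)


section Aux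

open Polynomial

lemma eval_charpoly_aux {d : ℕ} (M : Matrix (Fin d) (Fin d) ℂ) (x : ℂ) :
    (Matrix.charpoly M).eval x
      = Matrix.det (x • (1 : Matrix (Fin d) (Fin d) ℂ) - M) := by
  rw [Matrix.charpoly, ← coe_evalRingHom, RingHom.map_det]
  congr 1
  ext i j
  rcases eq_or_ne i j with h | h <;>
    simp [h, Matrix.charmatrix_apply, Matrix.one_apply, Matrix.smul_apply]

lemma root_pow_eq_one {d n : ℕ} (A : Matrix (Fin d) (Fin d) ℂ) (hA : A ^ n = 1)
    (hn : n ≠ 0) {μ : ℂ} (hμ : μ ∈ A.charpoly.roots) : μ ^ n = 1 := by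
  have hne : A.charpoly ≠ 0 := A.charpoly_monic.ne_zero
  have hroot : (Matrix.charpoly A).eval μ = 0 := by
    exact (Polynomial.mem_roots hne).mp hμ
  rw [eval_charpoly_aux] at hroot
  obtain ⟨v, hv0, hv⟩ := (Matrix.exists_mulVec_eq_zero_iff).mpr hroot
  have hAv : A.mulVec v = μ • v := by
    rw [Matrix.sub_mulVec, sub_eq_zero] at hv
    rw [← hv, Matrix.smul_mulVec, Matrix.one_mulVec]
  have hpow : ∀ k : ℕ, (A ^ k).mulVec v = μ ^ k • v := by
    intro k
    induction k with
    | zero => simp [Matrix.one_mulVec]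
    | succ k ih =>
        rw [pow_succ, ← Matrix.mulVec_mulVec, hAv, Matrix.mulVec_smul, ih,
          smul_smul, pow_succ, mul_comm]
  have h1 : v = μ ^ n • v := by simpa [hA, Matrix.one_mulVec] using hpow n
  obtain ⟨i, hi⟩ : ∃ i, v i ≠ 0 := Function.ne_iff.mp hv0
  have h2 : μ ^ n * v i = 1 * v i := by
    have := congrFun h1 i
    simpa using this.symm
  exact mul_right_cancel₀ hi h2

lemma real_eq_one_of_pow {a : ℝ} (h0 : 0 ≤ a) {n : ℕ} (hn : n ≠ 0) (h : a ^ n = 1) :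
    a = 1 := by
  by_contra hne
  rcases lt_or_gt_of_ne hne with hlt | hgt
  · have := pow_lt_one₀ h0 hlt hn; rw [h] at this; exact lt_irrefl 1 this
  · have := one_lt_pow₀ hgt hn; rw [h] at this; exact lt_irrefl 1 this

lemma conj_eq_inv_of_pow_eq_one {n : ℕ} (hn : n ≠ 0) {μ : ℂ} (h : μ ^ n = 1) :
    (starRingEnd ℂ) μ = μ⁻¹ := by
  have hns : Complex.normSq μ ^ n = 1 := by
    have := congrArg Complex.normSq h
    simpa [map_pow] using this
  have h1 : Complex.normSq μ = 1 := real_eq_one_of_pow (Complex.normSq_nonneg μ) hn hns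
  have hmul : μ * (starRingEnd ℂ) μ = 1 := by
    rw [Complex.mul_conj]; exact_mod_cast h1
  exact (inv_eq_of_mul_eq_one_right hmul).symm

lemma trace_inv_eq_conj_trace {d n : ℕ} (hn : n ≠ 0) (A B : Matrix (Fin d) (Fin d) ℂ)
    (hAB : A * B = 1) (hA : A ^ n = 1) :
    Matrix.trace B = (starRingEnd ℂ) (Matrix.trace A) := by
  classical
  have hBA : B * A = 1 := mul_eq_one_comm.mp hAB
  set p := A.charpoly with hp
  set r := p.roots with hrdef
  have hmon : p.Monic := A.charpoly_monic
  have hsplits : p.Splits := IsAlgClosed.splits p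
  have hpow1 : ∀ μ ∈ r, μ ^ n = 1 := fun μ hμ => root_pow_eq_one A hA hn hμ
  have hne0 : ∀ μ ∈ r, μ ≠ 0 := by
    intro μ hμ h0
    have := hpow1 μ hμ
    rw [h0, zero_pow hn] at this
    exact zero_ne_one this
  have hrcard : Multiset.card r = d := by
    have := (Polynomial.splits_iff_card_roots).mp hsplits
    rwa [Matrix.charpoly_natDegree_eq_dim, Fintype.card_fin] at this
  have hdetA : A.det = r.prod := Matrix.det_eq_prod_roots_charpoly A
  have hdetA0 : A.det ≠ 0 := by
    intro h
    have h2 : A.det * B.det = 1 := by rw [← Matrix.det_mul, hAB, Matrix.det_one]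
    rw [h, zero_mul] at h2
    exact zero_ne_one h2
  have hpfac : p = (r.map (fun μ => X - C μ)).prod :=
    hsplits.eq_prod_roots_of_monic hmon
  set q : ℂ[X] := ((r.map (fun μ => μ⁻¹)).map (fun μ => X - C μ)).prod with hq
  have heval : ∀ x : ℂ, x ≠ 0 → (B.charpoly).eval x = q.eval x := by
    intro x hx
    apply mul_right_cancel₀ hdetA0
    have l2 : (x • (1 : Matrix (Fin d) (Fin d) ℂ) - B) * A = x • A - 1 := by
      rw [Matrix.sub_mul, smul_mul_assoc, Matrix.one_mul, hBA]
    have l3 : x • A - (1 : Matrix (Fin d) (Fin d) ℂ)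
        = x • (A - x⁻¹ • (1 : Matrix (Fin d) (Fin d) ℂ)) := by
      rw [smul_sub, smul_smul, mul_inv_cancel₀ hx, one_smul]
    have hL : (B.charpoly).eval x * A.det = (r.map (fun μ => x * μ - 1)).prod := by
      rw [eval_charpoly_aux, ← Matrix.det_mul, l2, l3, Matrix.det_smul, Fintype.card_fin,
        show A - x⁻¹ • (1 : Matrix (Fin d) (Fin d) ℂ)
            = -(x⁻¹ • (1 : Matrix (Fin d) (Fin d) ℂ) - A) by rw [neg_sub],
        Matrix.det_neg, Fintype.card_fin, ← eval_charpoly_aux, ← hp, hpfac,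
        Polynomial.eval_multiset_prod, Multiset.map_map]
      have hev : Multiset.map (Polynomial.eval x⁻¹ ∘ fun μ => X - C μ) r
          = Multiset.map (fun μ => x⁻¹ - μ) r :=
        Multiset.map_congr rfl (by intro μ _; simp)
      rw [hev]
      have hxd : x ^ d = (r.map (fun _ => x)).prod := by
        rw [Multiset.map_const', Multiset.prod_replicate, hrcard]
      have hnd : (-1 : ℂ) ^ d = (r.map (fun _ => (-1 : ℂ))).prod := by
        rw [Multiset.map_const', Multiset.prod_replicate, hrcard]
      rw [hxd, hnd, ← Multiset.prod_map_mul, ← Multiset.prod_map_mul]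
      congr 1
      apply Multiset.map_congr rfl
      intro μ _
      linear_combination (μ * x - 1 - x * μ + 1 : ℂ) * (0:ℂ) + (-1 : ℂ) * mul_inv_cancel₀ hx
    have hR : q.eval x * A.det = (r.map (fun μ => x * μ - 1)).prod := by
      rw [hq, hdetA, Polynomial.eval_multiset_prod, Multiset.map_map]
      have hev : Multiset.map (Polynomial.eval x ∘ fun μ => X - C μ) (r.map (fun μ => μ⁻¹))
          = Multiset.map (fun μ => x - μ⁻¹) r := by
        rw [Multiset.map_map]
        exact Multiset.map_congr rfl (by intro μ _; simp)
      rw [hev,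
        show r.prod = (Multiset.map (fun μ => μ) r).prod by rw [Multiset.map_id'],
        ← Multiset.prod_map_mul]
      congr 1
      apply Multiset.map_congr rfl
      intro μ hμ
      linear_combination (-1 : ℂ) * inv_mul_cancel₀ (hne0 μ hμ) +
        (x - μ⁻¹ - x) * (0:ℂ)
    rw [hL, hR]
  have hkey : B.charpoly = q := by
    have hsub : B.charpoly - q = 0 := by
      apply Polynomial.eq_zero_of_infinite_isRoot
      apply Set.Infinite.mono (s := {x : ℂ | x ≠ 0})
      · intro x hx
        simp only [Set.mem_setOf_eq] at hx ⊢
        simp [Polynomial.IsRoot, sub_eq_zero, heval x hx]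
      · exact Set.Finite.infinite_compl (Set.finite_singleton 0)
    exact sub_eq_zero.mp hsub
  have htrB : Matrix.trace B = (r.map (fun μ => μ⁻¹)).sum := by
    rw [Matrix.trace_eq_sum_roots_charpoly, hkey, hq, Polynomial.roots_multiset_prod_X_sub_C]
  have htrA : (starRingEnd ℂ) (Matrix.trace A) = (r.map (fun μ => μ⁻¹)).sum := by
    rw [Matrix.trace_eq_sum_roots_charpoly, map_multiset_sum]
    congr 1
    exact Multiset.map_congr rfl (fun μ hμ => conj_eq_inv_of_pow_eq_one hn (hpow1 μ hμ))
  rw [htrB, htrA]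


end Aux

section Aux2

variable {G : Type*} [Group G] [Fintype G]

lemma mem_dosetFinset {H : Subgroup G} {x y : G} :
    y ∈ dosetFinset H x ↔ ∃ h ∈ H, ∃ h' ∈ H, y = h * x * h' := by
  unfold dosetFinset
  simp only [Set.mem_toFinset, Set.mem_setOf_eq]

variable {V : Type*} [AddCommGroup V] [Module ℂ V]

lemma repChar_mul_comm (ρ : Representation ℂ G V) (a b : G) :
    repChar ρ (a * b) = repChar ρ (b * a) := by
  unfold repChar
  rw [map_mul ρ, map_mul ρ]
  exact LinearMap.trace_mul_comm ℂ (ρ a) (ρ b)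

lemma repChar_inv [FiniteDimensional ℂ V] (ρ : Representation ℂ G V) (g : G) :
    repChar ρ g⁻¹ = (starRingEnd ℂ) (repChar ρ g) := by
  classical
  set d := Module.finrank ℂ V with hd
  let b : Module.Basis (Fin d) ℂ V := Module.finBasis ℂ V
  set A := LinearMap.toMatrix b b (ρ g) with hA
  set B := LinearMap.toMatrix b b (ρ g⁻¹) with hB
  have hmul : ∀ a c : G,
      LinearMap.toMatrix b b (ρ a) * LinearMap.toMatrix b b (ρ c)
        = LinearMap.toMatrix b b (ρ (a * c)) := by
    intro a c
    rw [map_mul ρ, LinearMap.toMatrix_mul]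
  have hAB : A * B = 1 := by
    rw [hA, hB, hmul, mul_inv_cancel, map_one, LinearMap.toMatrix_one]
  have hpow : ∀ k : ℕ, A ^ k = LinearMap.toMatrix b b (ρ (g ^ k)) := by
    intro k
    induction k with
    | zero => simp [LinearMap.toMatrix_one]
    | succ k ih => rw [pow_succ, ih, hA, hmul, pow_succ]
  have hApow : A ^ Fintype.card G = 1 := by
    rw [hpow, pow_card_eq_one, map_one, LinearMap.toMatrix_one]
  have := trace_inv_eq_conj_trace Fintype.card_ne_zero A B hAB hApow
  unfold repChar
  rw [LinearMap.trace_eq_matrix_trace ℂ b, LinearMap.trace_eq_matrix_trace ℂ b]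
  exact this

lemma repChar_inv_eq_self [FiniteDimensional ℂ V] (ρ : Representation ℂ G V)
    (hrat : ∀ g : G, ∃ q : ℚ, repChar ρ g = (q : ℂ)) (g : G) :
    repChar ρ g⁻¹ = repChar ρ g := by
  obtain ⟨q, hq⟩ := hrat g
  rw [repChar_inv ρ g, hq]
  simp

/-- `f` is constant on double cosets. -/
lemma sum_repChar_doset_const (ρ : Representation ℂ G V) {H : Subgroup G}
    {h0 h1 : G} (hh0 : h0 ∈ H) (hh1 : h1 ∈ H) (w : G) :
    ∑ h ∈ (H : Set G).toFinset, repChar ρ ((h0 * w * h1)⁻¹ * h)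
      = ∑ h ∈ (H : Set G).toFinset, repChar ρ (w⁻¹ * h) := by
  classical
  refine Finset.sum_bij' (i := fun h _ => h0⁻¹ * h * h1⁻¹) (j := fun h _ => h0 * h * h1)
    ?_ ?_ ?_ ?_ ?_
  · intro a ha
    simp only [Set.mem_toFinset, SetLike.mem_coe] at ha ⊢
    exact mul_mem (mul_mem (inv_mem hh0) ha) (inv_mem hh1)
  · intro a ha
    simp only [Set.mem_toFinset, SetLike.mem_coe] at ha ⊢
    exact mul_mem (mul_mem hh0 ha) hh1
  · intro a _; group
  · intro a _; group
  · intro a _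
    have e1 : (h0 * w * h1)⁻¹ * a = h1⁻¹ * ((w⁻¹ * h0⁻¹ * a)) := by group
    have e2 : (w⁻¹ * h0⁻¹ * a) * h1⁻¹ = w⁻¹ * (h0⁻¹ * a * h1⁻¹) := by group
    rw [e1, repChar_mul_comm, e2]

lemma sum_sum_repChar_doset (ρ : Representation ℂ G V) (H : Subgroup G) (x : G) :
    ∑ y ∈ dosetFinset H x, ∑ h ∈ (H : Set G).toFinset, repChar ρ (y⁻¹ * h)
      = ((H : Set G).toFinset.card : ℂ) * ∑ y ∈ dosetFinset H x, repChar ρ y⁻¹ := by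
  classical
  rw [Finset.sum_comm]
  have hinner : ∀ h ∈ (H : Set G).toFinset,
      ∑ y ∈ dosetFinset H x, repChar ρ (y⁻¹ * h)
        = ∑ y ∈ dosetFinset H x, repChar ρ y⁻¹ := by
    intro h hh
    simp only [Set.mem_toFinset, SetLike.mem_coe] at hh
    refine Finset.sum_bij' (i := fun y _ => h⁻¹ * y) (j := fun y _ => h * y) ?_ ?_ ?_ ?_ ?_
    · intro a ha
      rw [mem_dosetFinset] at ha ⊢
      obtain ⟨k, hk, k', hk', rfl⟩ := ha
      exact ⟨h⁻¹ * k, mul_mem (inv_mem hh) hk, k', hk', by group⟩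
    · intro a ha
      rw [mem_dosetFinset] at ha ⊢
      obtain ⟨k, hk, k', hk', rfl⟩ := ha
      exact ⟨h * k, mul_mem hh hk, k', hk', by group⟩
    · intro a _; group
    · intro a _; group
    · intro a _
      congr 1
      group
  rw [Finset.sum_congr rfl hinner, Finset.sum_const, nsmul_eq_mul]

lemma interConj_mul_doset_card (H : Subgroup G) (x : G) :
    interConjCard H x * (dosetFinset H x).card
      = (H : Set G).toFinset.card * (H : Set G).toFinset.card := by
  classical
  set Hf := (H : Set G).toFinset with hHfdef
  have memHf : ∀ g : G, g ∈ Hf ↔ g ∈ H := by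
    intro g; simp [hHfdef]
  set K := Finset.univ.filter (fun g : G => g ∈ H ∧ ∃ h ∈ H, g = x * h * x⁻¹) with hKdef
  have hKcard : interConjCard H x = K.card := by
    unfold interConjCard
    rw [Nat.card_eq_fintype_card, Fintype.card_subtype]
  have hmaps : ∀ p ∈ Hf ×ˢ Hf, p.1 * x * p.2 ∈ dosetFinset H x := by
    intro p hp
    rw [Finset.mem_product] at hp
    rw [mem_dosetFinset]
    exact ⟨p.1, (memHf _).1 hp.1, p.2, (memHf _).1 hp.2, rfl⟩
  have hsum := Finset.card_eq_sum_card_fiberwise hmaps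
  have hfib : ∀ z ∈ dosetFinset H x,
      ((Hf ×ˢ Hf).filter (fun p => p.1 * x * p.2 = z)).card = K.card := by
    intro z hz
    rw [mem_dosetFinset] at hz
    obtain ⟨h0, hh0, h0', hh0', hzeq⟩ := hz
    refine Finset.card_bij' (i := fun p _ => p.1⁻¹ * h0)
      (j := fun a _ => (h0 * a⁻¹, x⁻¹ * a * x * h0')) ?_ ?_ ?_ ?_
    · intro p hp
      rw [Finset.mem_filter, Finset.mem_product] at hp
      obtain ⟨⟨hp1, hp2⟩, hpz⟩ := hp
      rw [memHf] at hp1 hp2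
      have e0 : p.1 * x * p.2 = h0 * x * h0' := hpz.trans hzeq
      have e : x⁻¹ * (p.1⁻¹ * h0) * x = p.2 * h0'⁻¹ := by
        calc x⁻¹ * (p.1⁻¹ * h0) * x
            = x⁻¹ * p.1⁻¹ * (h0 * x * h0') * h0'⁻¹ := by group
          _ = x⁻¹ * p.1⁻¹ * (p.1 * x * p.2) * h0'⁻¹ := by rw [e0]
          _ = p.2 * h0'⁻¹ := by group
      rw [hKdef, Finset.mem_filter]
      refine ⟨Finset.mem_univ _, mul_mem (inv_mem hp1) hh0,
        x⁻¹ * (p.1⁻¹ * h0) * x, ?_, by group⟩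
      rw [e]
      exact mul_mem hp2 (inv_mem hh0')
    · intro a ha
      rw [hKdef, Finset.mem_filter] at ha
      obtain ⟨-, haH, h, hhH, haeq⟩ := ha
      have hx1 : x⁻¹ * a * x = h := by rw [haeq]; group
      rw [Finset.mem_filter, Finset.mem_product]
      refine ⟨⟨?_, ?_⟩, ?_⟩
      · rw [memHf]; exact mul_mem hh0 (inv_mem haH)
      · rw [memHf]
        show x⁻¹ * a * x * h0' ∈ H
        rw [show x⁻¹ * a * x * h0' = (x⁻¹ * a * x) * h0' by group, hx1]
        exact mul_mem hhH hh0'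
      · show (h0 * a⁻¹) * x * (x⁻¹ * a * x * h0') = z
        rw [hzeq]
        group
    · intro p hp
      rw [Finset.mem_filter, Finset.mem_product] at hp
      obtain ⟨⟨hp1, hp2⟩, hpz⟩ := hp
      have e0 : p.1 * x * p.2 = h0 * x * h0' := hpz.trans hzeq
      have e : x⁻¹ * (p.1⁻¹ * h0) * x = p.2 * h0'⁻¹ := by
        calc x⁻¹ * (p.1⁻¹ * h0) * x
            = x⁻¹ * p.1⁻¹ * (h0 * x * h0') * h0'⁻¹ := by group
          _ = x⁻¹ * p.1⁻¹ * (p.1 * x * p.2) * h0'⁻¹ := by rw [e0]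
          _ = p.2 * h0'⁻¹ := by group
      have c2 : x⁻¹ * (p.1⁻¹ * h0) * x * h0' = p.2 := by rw [e]; group
      show (h0 * (p.1⁻¹ * h0)⁻¹, x⁻¹ * (p.1⁻¹ * h0) * x * h0') = p
      have c1 : h0 * (p.1⁻¹ * h0)⁻¹ = p.1 := by group
      rw [c1, c2]
    · intro a _
      show (h0 * a⁻¹)⁻¹ * h0 = a
      group
  have hth : (Hf ×ˢ Hf).card = (dosetFinset H x).card * K.card := by
    rw [hsum, Finset.sum_congr rfl hfib, Finset.sum_const, smul_eq_mul]
  rw [Finset.card_product] at hth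
  rw [hKcard, mul_comm]
  exact hth.symm

end Aux2


section Aux3

variable {G V : Type*} [Group G] [Fintype G] [AddCommGroup V] [Module ℂ V]

lemma pointwise_scalar [FiniteDimensional ℂ V] (ρ : Representation ℂ G V)
    (hrat : ∀ g : G, ∃ q : ℚ, repChar ρ g = (q : ℂ)) (H : Subgroup G) (x z : G)
    (hz : ∃ h ∈ H, ∃ h' ∈ H, z = h * x * h') :
    ∑ h ∈ (H : Set G).toFinset, repChar ρ (z⁻¹ * h)
      = (interConjCard H x : ℂ) *
          ((((H : Set G).toFinset.card : ℂ))⁻¹ * ∑ y ∈ dosetFinset H x, repChar ρ y) := by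
  classical
  obtain ⟨h0, hh0, h0', hh0', rfl⟩ := hz
  set Hf := (H : Set G).toFinset with hHfdef
  set D := dosetFinset H x with hDdef
  set S := ∑ y ∈ D, repChar ρ y with hSdef
  rw [sum_repChar_doset_const ρ hh0 hh0' x]
  have step2 : ∑ y ∈ D, (∑ h ∈ Hf, repChar ρ (y⁻¹ * h))
      = (D.card : ℂ) * ∑ h ∈ Hf, repChar ρ (x⁻¹ * h) := by
    have : ∀ y ∈ D, (∑ h ∈ Hf, repChar ρ (y⁻¹ * h)) = ∑ h ∈ Hf, repChar ρ (x⁻¹ * h) := by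
      intro y hy
      rw [hDdef, mem_dosetFinset] at hy
      obtain ⟨k, hk, k', hk', rfl⟩ := hy
      exact sum_repChar_doset_const ρ hk hk' x
    rw [Finset.sum_congr rfl this, Finset.sum_const, nsmul_eq_mul]
  have step3 : ∑ y ∈ D, (∑ h ∈ Hf, repChar ρ (y⁻¹ * h)) = (Hf.card : ℂ) * S := by
    rw [hDdef, sum_sum_repChar_doset ρ H x]
    congr 1
    rw [hSdef, hDdef]
    exact Finset.sum_congr rfl fun y _ => repChar_inv_eq_self ρ hrat y
  have hxD : x ∈ D := by
    rw [hDdef, mem_dosetFinset]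
    exact ⟨1, one_mem H, 1, one_mem H, by group⟩
  have hD0 : (D.card : ℂ) ≠ 0 := by
    have : 0 < D.card := Finset.card_pos.mpr ⟨x, hxD⟩
    exact_mod_cast this.ne'
  have hH0 : (Hf.card : ℂ) ≠ 0 := by
    have h1 : (1 : G) ∈ Hf := by rw [hHfdef]; simp [one_mem]
    have : 0 < Hf.card := Finset.card_pos.mpr ⟨1, h1⟩
    exact_mod_cast this.ne'
  have hcard : (interConjCard H x : ℂ) * (D.card : ℂ) = (Hf.card : ℂ) * (Hf.card : ℂ) := by
    have := interConj_mul_doset_card H x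
    exact_mod_cast congrArg (Nat.cast (R := ℂ)) this
  apply mul_left_cancel₀ hD0
  rw [← step2, step3]
  have : (D.card : ℂ) * ((interConjCard H x : ℂ) * (((Hf.card : ℂ))⁻¹ * S))
      = ((interConjCard H x : ℂ) * (D.card : ℂ)) * (Hf.card : ℂ)⁻¹ * S := by ring
  rw [this, hcard, mul_assoc (Hf.card : ℂ) (Hf.card : ℂ), mul_inv_cancel₀ hH0, mul_one]

end Aux3

/-- If moreover `χ_V` is rational-valued and `dim V^H = 1`, then
`p_H · e_V = (dim V / |G|) ∑_i |H ∩ x_i H x_i⁻¹| · χ_V(q_i) · q_i`,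
where `χ_V(q_i) = (1/|H|) ∑_{y ∈ H x_i H} χ_V(y)`. -/
theorem avgIdem_mul_centralIdem_eq_of_rat {G V : Type*} [Group G] [Fintype G]
    [AddCommGroup V] [Module ℂ V] [FiniteDimensional ℂ V]
    (ρ : Representation ℂ G V) (hirr : IsIrreducibleRep ρ)
    (hrat : ∀ g : G, ∃ q : ℚ, repChar ρ g = (q : ℂ))
    (H : Subgroup G) (hfix : Module.finrank ℂ (fixedSubmodule ρ H) = 1)
    (s : ℕ) (hs : 0 < s) (x : Fin s → G) (hx1 : x ⟨0, hs⟩ = 1)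
    (hreps : ∀ g : G, ∃! i : Fin s, ∃ h ∈ H, ∃ h' ∈ H, g = h * x i * h') :
    avgIdemC H * centralIdem ρ =
      ((Module.finrank ℂ V : ℂ) / (Fintype.card G : ℂ)) •
        ∑ i : Fin s,
          ((interConjCard H (x i) : ℂ) *
              ((Nat.card H : ℂ)⁻¹ * ∑ y ∈ dosetFinset H (x i), repChar ρ y)) •
            heckeElt H (x i) := by
  classical
  set cV : ℂ := (Module.finrank ℂ V : ℂ) / (Fintype.card G : ℂ) with hcV
  set Hf := (H : Set G).toFinset with hHfdef
  have hHcard : (Nat.card ↥H : ℂ) = (Hf.card : ℂ) := by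
    norm_cast
    simp [hHfdef, Set.toFinset_card, Nat.card_eq_fintype_card]
  set ι : G → Fin s := fun g => Classical.choose (hreps g) with hιdef
  have hι1 : ∀ g : G, ∃ h ∈ H, ∃ h' ∈ H, g = h * x (ι g) * h' :=
    fun g => (Classical.choose_spec (hreps g)).1
  have hι2 : ∀ (g : G) (i : Fin s), (∃ h ∈ H, ∃ h' ∈ H, g = h * x i * h') → ι g = i :=
    fun g i hQ => ((Classical.choose_spec (hreps g)).2 i hQ).symm
  have hDfilter : ∀ i : Fin s,
      dosetFinset H (x i) = Finset.univ.filter (fun z => ι z = i) := by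
    intro i
    ext z
    rw [mem_dosetFinset, Finset.mem_filter]
    constructor
    · intro hz
      exact ⟨Finset.mem_univ _, hι2 z i hz⟩
    · rintro ⟨-, rfl⟩
      exact hι1 z
  have hLHS : avgIdemC H * centralIdem ρ
      = ((Nat.card ↥H : ℂ)⁻¹ * cV) •
          ∑ z : G, (∑ h ∈ Hf, repChar ρ (z⁻¹ * h)) • MonoidAlgebra.single z (1 : ℂ) := by
    unfold avgIdemC centralIdem
    rw [smul_mul_assoc, mul_smul_comm, smul_smul]
    congr 1
    calc (∑ h ∈ Hf, MonoidAlgebra.single h (1 : ℂ))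
          * (∑ g : G, repChar ρ g⁻¹ • MonoidAlgebra.single g (1 : ℂ))
        = ∑ h ∈ Hf, ∑ g : G, repChar ρ g⁻¹ • MonoidAlgebra.single (h * g) (1 : ℂ) := by
          rw [Finset.sum_mul_sum]
          refine Finset.sum_congr rfl fun h _ => Finset.sum_congr rfl fun g _ => ?_
          rw [mul_smul_comm, MonoidAlgebra.single_mul_single, mul_one]
      _ = ∑ h ∈ Hf, ∑ z : G, repChar ρ (z⁻¹ * h) • MonoidAlgebra.single z (1 : ℂ) := by
          refine Finset.sum_congr rfl fun h _ => ?_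
          refine Fintype.sum_equiv (Equiv.mulLeft h) _ _ fun g => ?_
          have : ((Equiv.mulLeft h) g)⁻¹ * h = g⁻¹ := by
            simp only [Equiv.coe_mulLeft]
            group
          rw [this]
          rfl
      _ = ∑ z : G, (∑ h ∈ Hf, repChar ρ (z⁻¹ * h)) • MonoidAlgebra.single z (1 : ℂ) := by
          rw [Finset.sum_comm]
          exact Finset.sum_congr rfl fun z _ => (Finset.sum_smul).symm
  have hRHS : (cV • ∑ i : Fin s,
        ((interConjCard H (x i) : ℂ) *
            ((Nat.card ↥H : ℂ)⁻¹ * ∑ y ∈ dosetFinset H (x i), repChar ρ y)) •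
          heckeElt H (x i))
      = ((Nat.card ↥H : ℂ)⁻¹ * cV) •
          ∑ z : G,
            ((interConjCard H (x (ι z)) : ℂ) *
                ((Nat.card ↥H : ℂ)⁻¹ * ∑ y ∈ dosetFinset H (x (ι z)), repChar ρ y)) •
              MonoidAlgebra.single z (1 : ℂ) := by
    have h1 : ∀ i : Fin s,
        ((interConjCard H (x i) : ℂ) *
            ((Nat.card ↥H : ℂ)⁻¹ * ∑ y ∈ dosetFinset H (x i), repChar ρ y)) •
          heckeElt H (x i)
        = (Nat.card ↥H : ℂ)⁻¹ •
            ∑ y ∈ dosetFinset H (x i),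
              ((interConjCard H (x i) : ℂ) *
                  ((Nat.card ↥H : ℂ)⁻¹ * ∑ y ∈ dosetFinset H (x i), repChar ρ y)) •
                MonoidAlgebra.single y (1 : ℂ) := by
      intro i
      unfold heckeElt
      rw [smul_comm, Finset.smul_sum]
    rw [Finset.sum_congr rfl fun i _ => h1 i, ← Finset.smul_sum, smul_smul, mul_comm cV]
    congr 1
    have h2 : ∀ i : Fin s,
        ∑ y ∈ dosetFinset H (x i),
            ((interConjCard H (x i) : ℂ) *
                ((Nat.card ↥H : ℂ)⁻¹ * ∑ y' ∈ dosetFinset H (x i), repChar ρ y')) •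
              MonoidAlgebra.single y (1 : ℂ)
          = ∑ y ∈ Finset.univ.filter (fun z => ι z = i),
              ((interConjCard H (x (ι y)) : ℂ) *
                  ((Nat.card ↥H : ℂ)⁻¹ *
                    ∑ y' ∈ dosetFinset H (x (ι y)), repChar ρ y')) •
                MonoidAlgebra.single y (1 : ℂ) := by
      intro i
      rw [hDfilter i]
      refine Finset.sum_congr rfl fun y hy => ?_
      rw [Finset.mem_filter] at hy
      rw [hy.2, ← hDfilter i]
    rw [Finset.sum_congr rfl fun i _ => h2 i]
    exact Finset.sum_fiberwise_of_maps_to (fun z _ => Finset.mem_univ (ι z)) _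
  rw [hLHS, hRHS]
  congr 1
  refine Finset.sum_congr rfl fun z _ => ?_
  congr 1
  rw [hHcard]
  exact pointwise_scalar ρ hrat H (x (ι z)) z (hι1 z)
end

section
/- Let G be a finite group, H ≤ G a subgroup, x_1 = 1, x_2, …, x_s a complete set of representatives for the double cosets of H in G, and let V be an irreducible finite-dimensional complex representation of G. Then ∑_{j=1}^s |H ∩ x_j H x_j⁻¹| · χ_V(q_j^∨) · χ_V(q_j) = |G| · dim_ℂ(V^H) / dim V, where q_j := (1/|H|) · ∑_{y ∈ Hx_jH} y and q_j^∨ := (1/|H|) · ∑_{y ∈ Hx_jH} y⁻¹. -/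
open scoped Classical

section Aux
variable {G V : Type*} [Group G] [AddCommGroup V] [Module ℂ V] [FiniteDimensional ℂ V]
  (ρ : Representation ℂ G V)

/-- Schur: an intertwiner of an irreducible rep is scalar. -/
theorem schur_scalar
    (hirr : (Nontrivial V ∧ ∀ W : Submodule ℂ V, (∀ g : G, ∀ v ∈ W, ρ g v ∈ W) → W = ⊥ ∨ W = ⊤))
    (f : V →ₗ[ℂ] V) (hf : ∀ g : G, ρ g ∘ₗ f = f ∘ₗ ρ g) :
    ∃ c : ℂ, f = c • (LinearMap.id : V →ₗ[ℂ] V) := by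
  haveI := hirr.1
  obtain ⟨c, hc⟩ := Module.End.exists_eigenvalue (f : Module.End ℂ V)
  refine ⟨c, ?_⟩
  have hW : ∀ g : G, ∀ v ∈ (Module.End.eigenspace (f : Module.End ℂ V) c),
      ρ g v ∈ (Module.End.eigenspace (f : Module.End ℂ V) c) := by
    intro g v hv
    rw [Module.End.mem_eigenspace_iff] at hv ⊢
    have : f (ρ g v) = ρ g (f v) := by
      have := congrArg (fun L => L v) (hf g); simpa using this.symm
    rw [this, hv, map_smul]
  rcases hirr.2 _ hW with h | h
  · exact absurd h hc
  · ext v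
    have hv : v ∈ Module.End.eigenspace (f : Module.End ℂ V) c := h ▸ Submodule.mem_top
    rw [Module.End.mem_eigenspace_iff] at hv
    simpa using hv

variable [Fintype G]

/-- The averaged conjugation of an endomorphism is `|G| · tr T / dim V` times identity. -/
theorem avg_conj_eq_smul_id
    (hirr : (Nontrivial V ∧ ∀ W : Submodule ℂ V, (∀ g : G, ∀ v ∈ W, ρ g v ∈ W) → W = ⊥ ∨ W = ⊤))
    (T : V →ₗ[ℂ] V) :
    ∑ g : G, ρ g⁻¹ * T * ρ g
      = ((Fintype.card G : ℂ) * LinearMap.trace ℂ V T / (Module.finrank ℂ V : ℂ)) •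
        (LinearMap.id : V →ₗ[ℂ] V) := by
  haveI := hirr.1
  set Φ : V →ₗ[ℂ] V := ∑ g : G, ρ g⁻¹ * T * ρ g with hΦ
  have key : ∀ (u w : G) (z : V), ρ u (ρ w z) = ρ (u * w) z := by
    intro u w z; rw [map_mul]; rfl
  have hcomm : ∀ a : G, ρ a ∘ₗ Φ = Φ ∘ₗ ρ a := by
    intro a
    have hco : ∀ L₁ L₂ : V →ₗ[ℂ] V, L₁ ∘ₗ L₂ = L₁ * L₂ := fun _ _ => rfl
    rw [hco, hco, hΦ, Finset.mul_sum, Finset.sum_mul]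
    refine Fintype.sum_bijective (fun g => g * a⁻¹) (Group.mulRight_bijective a⁻¹) _ _ ?_
    intro g
    have h1 : (g * a⁻¹)⁻¹ = a * g⁻¹ := by group
    have h2 : g * a⁻¹ * a = g := by group
    ext v
    simp only [Module.End.mul_apply]
    rw [key (g * a⁻¹) a v, h2, h1, ← key a g⁻¹]
  obtain ⟨c, hc⟩ := schur_scalar ρ hirr Φ hcomm
  have htr : LinearMap.trace ℂ V Φ = (Fintype.card G : ℂ) * LinearMap.trace ℂ V T := by
    rw [hΦ, map_sum]
    have htg : ∀ g : G, LinearMap.trace ℂ V (ρ g⁻¹ * T * ρ g) = LinearMap.trace ℂ V T := by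
      intro g
      rw [LinearMap.trace_mul_comm, ← mul_assoc, ← map_mul, mul_inv_cancel, map_one, one_mul]
    simp [htg, Finset.card_univ, mul_comm]
  have hdim : (Module.finrank ℂ V : ℂ) ≠ 0 := by
    have : 0 < Module.finrank ℂ V := Module.finrank_pos
    exact_mod_cast this.ne'
  have htrc : LinearMap.trace ℂ V (c • (LinearMap.id : V →ₗ[ℂ] V))
      = c * (Module.finrank ℂ V : ℂ) := by
    simp [LinearMap.trace_id, mul_comm]
  rw [hc, htrc] at htr
  rw [hc]
  congr 1
  rw [eq_div_iff hdim]
  exact htr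

/-- Matrix coefficient orthogonality. -/
theorem matrix_coeff_orth
    (hirr : (Nontrivial V ∧ ∀ W : Submodule ℂ V, (∀ g : G, ∀ v ∈ W, ρ g v ∈ W) → W = ⊥ ∨ W = ⊤))
    (φ ψ : Module.Dual ℂ V) (v w : V) :
    ∑ g : G, φ (ρ g⁻¹ v) * ψ (ρ g w)
      = (Fintype.card G : ℂ) * φ w * ψ v / (Module.finrank ℂ V : ℂ) := by
  classical
  set T : V →ₗ[ℂ] V := LinearMap.smulRight φ w with hT
  have hTd : T = dualTensorHom ℂ V V (φ ⊗ₜ[ℂ] w) := by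
    ext u; simp [hT]
  have htrT : LinearMap.trace ℂ V T = φ w := by
    rw [hTd, LinearMap.trace_eq_contract_apply, contractLeft_apply]
  have havg := avg_conj_eq_smul_id ρ hirr T
  have happ : ∀ u : V, (∑ g : G, ρ g⁻¹ * T * ρ g) u
      = ∑ g : G, φ (ρ g u) • ((ρ g⁻¹) w) := by
    intro u
    rw [LinearMap.sum_apply]
    refine Finset.sum_congr rfl fun g _ => ?_
    simp [hT, Module.End.mul_apply, map_smul]
  have hmain : ∑ g : G, φ (ρ g v) * ψ (ρ g⁻¹ w)
      = (Fintype.card G : ℂ) * φ w * ψ v / (Module.finrank ℂ V : ℂ) := by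
    have := congrArg ψ (congrArg (fun L : V →ₗ[ℂ] V => L v) havg)
    simp only [happ v, map_sum, map_smul, smul_eq_mul, LinearMap.smul_apply,
      LinearMap.id_apply, htrT] at this
    rw [this]
    ring
  rw [← hmain]
  refine Fintype.sum_equiv (Equiv.inv G) _ _ ?_
  intro g
  simp
end Aux

section Count
variable {G : Type*} [Group G] [Fintype G] (H : Subgroup G) (x : G)

lemma interConjCard_eq_filter_card :
    interConjCard H x
      = (Finset.univ.filter (fun g : G => g ∈ H ∧ ∃ h ∈ H, g = x * h * x⁻¹)).card := by
  rw [interConjCard, Nat.card_eq_fintype_card, Fintype.card_subtype]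

lemma interConjCard_ne_zero : interConjCard H x ≠ 0 := by
  rw [interConjCard_eq_filter_card]
  have h1 : (1:G) ∈ Finset.univ.filter (fun g : G => g ∈ H ∧ ∃ h ∈ H, g = x * h * x⁻¹) :=
    Finset.mem_filter.mpr ⟨Finset.mem_univ _, H.one_mem, 1, H.one_mem, by group⟩
  exact Finset.card_ne_zero_of_mem h1

lemma fiber_card (y : G) (hy : y ∈ dosetFinset H x) :
    (Finset.univ.filter (fun p : H × H => (p.1 : G) * x * (p.2 : G) = y)).card
      = interConjCard H x := by
  rw [interConjCard_eq_filter_card]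
  rw [dosetFinset, Set.mem_toFinset] at hy
  obtain ⟨h₀, hh₀, h₀', hh₀', rfl⟩ := hy
  have hmem : ∀ g ∈ Finset.univ.filter (fun g : G => g ∈ H ∧ ∃ h ∈ H, g = x * h * x⁻¹),
      x⁻¹ * g⁻¹ * x ∈ H := by
    intro g hg
    obtain ⟨-, hgH, h, hh, rfl⟩ := Finset.mem_filter.mp hg
    have e : x⁻¹ * (x * h * x⁻¹)⁻¹ * x = h⁻¹ := by group
    rw [e]; exact H.inv_mem hh
  refine Finset.card_bij' (fun p _ => h₀⁻¹ * (p.1 : G))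
    (fun g hg => (⟨h₀, hh₀⟩ * ⟨g, (Finset.mem_filter.mp hg).2.1⟩,
      (⟨x⁻¹ * g⁻¹ * x, hmem g hg⟩ : H) * ⟨h₀', hh₀'⟩)) ?_ ?_ ?_ ?_
  · intro p hp
    have hkey : (p.1 : G) * x * (p.2 : G) = h₀ * x * h₀' := (Finset.mem_filter.mp hp).2
    refine Finset.mem_filter.mpr ⟨Finset.mem_univ _,
      H.mul_mem (H.inv_mem hh₀) p.1.2, h₀' * (p.2 : G)⁻¹, H.mul_mem hh₀' (H.inv_mem p.2.2), ?_⟩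
    beta_reduce
    have e : (p.1 : G) = h₀ * x * h₀' * (p.2 : G)⁻¹ * x⁻¹ := by rw [← hkey]; group
    rw [e]; group
  · intro g hg
    refine Finset.mem_filter.mpr ⟨Finset.mem_univ _, ?_⟩
    beta_reduce
    simp only [Subgroup.coe_mul]
    group
  · intro p hp
    have hkey : (p.1 : G) * x * (p.2 : G) = h₀ * x * h₀' := (Finset.mem_filter.mp hp).2
    have e : (p.2 : G) = x⁻¹ * (p.1 : G)⁻¹ * (h₀ * x * h₀') := by rw [← hkey]; group
    beta_reduce
    refine Prod.ext (Subtype.ext ?_) (Subtype.ext ?_)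
    · simp only [Subgroup.coe_mul]
      group
    · simp only [Subgroup.coe_mul]
      rw [e]
      group
  · intro g hg
    beta_reduce
    simp only [Subgroup.coe_mul]
    group

lemma doset_sum_eq (F : G → ℂ) :
    (interConjCard H x : ℂ) * ∑ y ∈ dosetFinset H x, F y
      = ∑ p : H × H, F ((p.1 : G) * x * (p.2 : G)) := by
  have himg : (Finset.univ : Finset (H × H)).image (fun p => (p.1 : G) * x * (p.2 : G))
      = dosetFinset H x := by
    ext y
    simp only [Finset.mem_image, Finset.mem_univ, true_and, dosetFinset, Set.mem_toFinset,
      Set.mem_setOf_eq]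
    constructor
    · rintro ⟨p, rfl⟩
      exact ⟨p.1, p.1.2, p.2, p.2.2, rfl⟩
    · rintro ⟨h, hh, h', hh', rfl⟩
      exact ⟨(⟨h, hh⟩, ⟨h', hh'⟩), rfl⟩
  rw [Finset.sum_comp F (fun p : H × H => (p.1 : G) * x * (p.2 : G)), himg,
    Finset.mul_sum]
  refine Finset.sum_congr rfl fun y hy => ?_
  rw [fiber_card H x y hy, nsmul_eq_mul]
end Count


section Proj
variable {G V : Type*} [Group G] [Fintype G] [AddCommGroup V] [Module ℂ V]
  [FiniteDimensional ℂ V] (ρ : Representation ℂ G V) (H : Subgroup G)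

noncomputable def Pav : V →ₗ[ℂ] V := (Nat.card H : ℂ)⁻¹ • ∑ h : H, ρ (h : G)

lemma cardH_ne_zero : (Nat.card H : ℂ) ≠ 0 := by
  exact_mod_cast Nat.card_pos.ne'

lemma sumH_left (h₀ : H) : ρ (h₀ : G) * (∑ h : H, ρ (h : G)) = ∑ h : H, ρ (h : G) := by
  rw [Finset.mul_sum]
  refine Fintype.sum_bijective (fun h => h₀ * h) (Group.mulLeft_bijective h₀) _ _ fun h => ?_
  rw [← map_mul]
  norm_cast

lemma sumH_right (h₀ : H) : (∑ h : H, ρ (h : G)) * ρ (h₀ : G) = ∑ h : H, ρ (h : G) := by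
  rw [Finset.sum_mul]
  refine Fintype.sum_bijective (fun h => h * h₀) (Group.mulRight_bijective h₀) _ _ fun h => ?_
  rw [← map_mul]
  norm_cast

lemma Pav_left (h₀ : H) : ρ (h₀ : G) * Pav ρ H = Pav ρ H := by
  rw [Pav, mul_smul_comm, sumH_left]

lemma Pav_right (h₀ : H) : Pav ρ H * ρ (h₀ : G) = Pav ρ H := by
  rw [Pav, smul_mul_assoc, sumH_right]

lemma Pav_idem : Pav ρ H * Pav ρ H = Pav ρ H := by
  nth_rewrite 1 [Pav]
  rw [smul_mul_assoc, Finset.sum_mul]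
  have : ∀ h : H, ρ (h : G) * Pav ρ H = Pav ρ H := fun h => Pav_left ρ H h
  rw [Finset.sum_congr rfl fun h _ => this h, Finset.sum_const, Finset.card_univ,
    ← Nat.card_eq_fintype_card, Pav, smul_comm, ← Nat.cast_smul_eq_nsmul ℂ, smul_smul,
    mul_inv_cancel₀ (cardH_ne_zero H), one_smul]

lemma Pav_isProj : LinearMap.IsProj (fixedSubmodule ρ H) (Pav ρ H) := by
  constructor
  · intro v h hh
    have := congrArg (fun L : V →ₗ[ℂ] V => L v) (Pav_left ρ H ⟨h, hh⟩)
    simpa using this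
  · intro v hv
    rw [Pav, LinearMap.smul_apply, LinearMap.sum_apply]
    have : ∀ h : H, ρ (h : G) v = v := fun h => hv (h : G) h.2
    rw [Finset.sum_congr rfl fun h _ => this h, Finset.sum_const, Finset.card_univ,
      ← Nat.card_eq_fintype_card, ← Nat.cast_smul_eq_nsmul ℂ, smul_smul,
      inv_mul_cancel₀ (cardH_ne_zero H), one_smul]

lemma trace_Pav :
    LinearMap.trace ℂ V (Pav ρ H) = (Module.finrank ℂ (fixedSubmodule ρ H) : ℂ) :=
  (Pav_isProj ρ H).trace

end Proj

section TraceIds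
variable {G V : Type*} [Group G] [Fintype G] [AddCommGroup V] [Module ℂ V]
  [FiniteDimensional ℂ V] (ρ : Representation ℂ G V) (H : Subgroup G)

noncomputable def FF (g : G) : ℂ := LinearMap.trace ℂ V (Pav ρ H * ρ g * Pav ρ H)

lemma FF_bi (a b : H) (g : G) : FF ρ H ((a : G) * g * (b : G)) = FF ρ H g := by
  rw [FF, FF]
  congr 1
  rw [map_mul, map_mul]
  calc Pav ρ H * (ρ (a : G) * ρ g * ρ (b : G)) * Pav ρ H
      = (Pav ρ H * ρ (a : G)) * ρ g * (ρ (b : G) * Pav ρ H) := by noncomm_ring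
    _ = Pav ρ H * ρ g * Pav ρ H := by rw [Pav_right ρ H a, Pav_left ρ H b]

lemma sum_prod_ops (x : G) :
    ∑ p : H × H, ρ ((p.1 : G) * x * (p.2 : G))
      = ((Nat.card H : ℂ))^2 • (Pav ρ H * ρ x * Pav ρ H) := by
  have hSig : ∑ h : H, ρ (h : G) = (Nat.card H : ℂ) • Pav ρ H := by
    rw [Pav, smul_smul, mul_inv_cancel₀ (cardH_ne_zero H), one_smul]
  have : ∑ p : H × H, ρ ((p.1 : G) * x * (p.2 : G))
      = (∑ a : H, ρ (a : G)) * ρ x * (∑ b : H, ρ (b : G)) := by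
    rw [Finset.sum_mul, Finset.sum_mul_sum]
    rw [Fintype.sum_prod_type]
    refine Finset.sum_congr rfl fun a _ => Finset.sum_congr rfl fun b _ => ?_
    rw [map_mul, map_mul]
  rw [this, hSig, smul_mul_assoc, smul_mul_assoc, mul_smul_comm, smul_smul, sq]

lemma sum_prod_char (x : G) :
    ∑ p : H × H, repChar ρ ((p.1 : G) * x * (p.2 : G))
      = ((Nat.card H : ℂ))^2 * FF ρ H x := by
  have h := congrArg (LinearMap.trace ℂ V) (sum_prod_ops ρ H x)
  rw [map_sum, map_smul] at h
  simp only [repChar]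
  rw [h, smul_eq_mul, FF]

lemma sum_prod_char_inv (x : G) :
    ∑ p : H × H, repChar ρ (((p.1 : G) * x * (p.2 : G))⁻¹)
      = ((Nat.card H : ℂ))^2 * FF ρ H x⁻¹ := by
  rw [← sum_prod_char ρ H x⁻¹]
  refine Fintype.sum_equiv ⟨fun p => (p.2⁻¹, p.1⁻¹), fun p => (p.2⁻¹, p.1⁻¹),
    fun p => by simp, fun p => by simp⟩ _ _ fun p => ?_
  simp only [Equiv.coe_fn_mk]
  congr 1
  push_cast
  group

lemma sum_prod_K (x : G) :
    ∑ p : H × H, (FF ρ H (((p.1 : G) * x * (p.2 : G))⁻¹) * FF ρ H ((p.1 : G) * x * (p.2 : G)))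
      = ((Nat.card H : ℂ))^2 * (FF ρ H x⁻¹ * FF ρ H x) := by
  have hconst : ∀ p : H × H,
      FF ρ H (((p.1 : G) * x * (p.2 : G))⁻¹) * FF ρ H ((p.1 : G) * x * (p.2 : G))
        = FF ρ H x⁻¹ * FF ρ H x := by
    intro p
    have h1 : FF ρ H ((p.1 : G) * x * (p.2 : G)) = FF ρ H x := FF_bi ρ H p.1 p.2 x
    have h2 : FF ρ H (((p.1 : G) * x * (p.2 : G))⁻¹) = FF ρ H x⁻¹ := by
      have e : ((p.1 : G) * x * (p.2 : G))⁻¹ = ((p.2⁻¹ : H) : G) * x⁻¹ * ((p.1⁻¹ : H) : G) := by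
        push_cast; group
      rw [e, FF_bi ρ H p.2⁻¹ p.1⁻¹ x⁻¹]
    rw [h1, h2]
  rw [Finset.sum_congr rfl fun p _ => hconst p, Finset.sum_const, Finset.card_univ,
    Fintype.card_prod, ← Nat.card_eq_fintype_card, nsmul_eq_mul]
  push_cast
  ring

end TraceIds

section Final
variable {G V : Type*} [Group G] [Fintype G] [AddCommGroup V] [Module ℂ V]
  [FiniteDimensional ℂ V] (ρ : Representation ℂ G V) (H : Subgroup G)

lemma trace_basis (L : V →ₗ[ℂ] V) :
    LinearMap.trace ℂ V L = ∑ i, (Module.finBasis ℂ V).repr (L (Module.finBasis ℂ V i)) i := by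
  rw [LinearMap.trace_eq_matrix_trace ℂ (Module.finBasis ℂ V), Matrix.trace]
  refine Finset.sum_congr rfl fun i _ => ?_
  rw [Matrix.diag_apply, LinearMap.toMatrix_apply]

lemma sum_K_eq
    (hirr : (Nontrivial V ∧ ∀ W : Submodule ℂ V, (∀ g : G, ∀ v ∈ W, ρ g v ∈ W) → W = ⊥ ∨ W = ⊤)) :
    ∑ g : G, FF ρ H g⁻¹ * FF ρ H g
      = (Fintype.card G : ℂ) * (Module.finrank ℂ (fixedSubmodule ρ H) : ℂ) /
          (Module.finrank ℂ V : ℂ) := by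
  classical
  set P := Pav ρ H with hPdef
  set b := Module.finBasis ℂ V with hbdef
  set ψ : Fin (Module.finrank ℂ V) → Module.Dual ℂ V := fun i => (b.coord i) ∘ₗ P with hψ
  have hψap : ∀ i u, ψ i u = b.repr (P u) i := fun i u => rfl
  have hF : ∀ g : G, FF ρ H g = ∑ i, ψ i (ρ g (b i)) := by
    intro g
    rw [FF, LinearMap.trace_mul_comm, ← mul_assoc, Pav_idem, trace_basis]
    rfl
  have hsum : ∑ i, ∑ j, ψ i (b j) * ψ j (b i)
      = (Module.finrank ℂ (fixedSubmodule ρ H) : ℂ) := by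
    rw [← trace_Pav ρ H, ← Pav_idem ρ H, trace_basis]
    rw [Finset.sum_comm]
    refine Finset.sum_congr rfl fun i _ => ?_
    have hPP : (P * P) (b i) = ∑ j, b.repr (P (b i)) j • P (b j) := by
      show P (P (b i)) = _
      conv_lhs => rw [← b.sum_repr (P (b i))]
      rw [map_sum]
      exact Finset.sum_congr rfl fun j _ => by rw [map_smul]
    rw [hPP, map_sum, Finsupp.coe_finset_sum, Finset.sum_apply]
    refine Finset.sum_congr rfl fun j _ => ?_
    rw [map_smul, hψap, hψap]
    simp [mul_comm]
    exact Or.inl rfl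
  calc ∑ g : G, FF ρ H g⁻¹ * FF ρ H g
      = ∑ g : G, ∑ i, ∑ j, ψ i (ρ g⁻¹ (b i)) * ψ j (ρ g (b j)) := by
        refine Finset.sum_congr rfl fun g _ => ?_
        rw [hF, hF, Finset.sum_mul_sum]
    _ = ∑ i, ∑ j, ∑ g : G, ψ i (ρ g⁻¹ (b i)) * ψ j (ρ g (b j)) := by
        rw [Finset.sum_comm]
        exact Finset.sum_congr rfl fun i _ => Finset.sum_comm
    _ = ∑ i, ∑ j, (Fintype.card G : ℂ) * ψ i (b j) * ψ j (b i) / (Module.finrank ℂ V : ℂ) := by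
        refine Finset.sum_congr rfl fun i _ => Finset.sum_congr rfl fun j _ => ?_
        exact matrix_coeff_orth ρ hirr (ψ i) (ψ j) (b i) (b j)
    _ = (Fintype.card G : ℂ) * (∑ i, ∑ j, ψ i (b j) * ψ j (b i)) / (Module.finrank ℂ V : ℂ) := by
        simp only [Finset.mul_sum, Finset.sum_div]
        exact Finset.sum_congr rfl fun i _ => Finset.sum_congr rfl fun j _ => by ring
    _ = _ := by rw [hsum]

end Final
/-- orthogonality relation for an irreducible representation `V`:
`∑_j |H ∩ x_j H x_j⁻¹| · χ_V(q_j^∨) · χ_V(q_j) = |G| · dim V^H / dim V`, where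
`χ_V(q_j^∨) = (1/|H|) ∑_{y ∈ H x_j H} χ_V(y⁻¹)` and
`χ_V(q_j) = (1/|H|) ∑_{y ∈ H x_j H} χ_V(y)`. -/
theorem hecke_orthogonality_self {G V : Type*} [Group G] [Fintype G]
    [AddCommGroup V] [Module ℂ V] [FiniteDimensional ℂ V]
    (ρ : Representation ℂ G V) (hirr : IsIrreducibleRep ρ)
    (H : Subgroup G) (s : ℕ) (hs : 0 < s) (x : Fin s → G) (hx1 : x ⟨0, hs⟩ = 1)
    (hreps : ∀ g : G, ∃! i : Fin s, ∃ h ∈ H, ∃ h' ∈ H, g = h * x i * h') :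
    ∑ j : Fin s,
        (interConjCard H (x j) : ℂ) *
          ((Nat.card H : ℂ)⁻¹ * ∑ y ∈ dosetFinset H (x j), repChar ρ y⁻¹) *
          ((Nat.card H : ℂ)⁻¹ * ∑ y ∈ dosetFinset H (x j), repChar ρ y)
      = (Fintype.card G : ℂ) * (Module.finrank ℂ (fixedSubmodule ρ H) : ℂ) /
          (Module.finrank ℂ V : ℂ) := by
  classical
  have hcH : (Nat.card H : ℂ) ≠ 0 := cardH_ne_zero H
  have hkey : ∀ j : Fin s,
      (interConjCard H (x j) : ℂ) *
          ((Nat.card H : ℂ)⁻¹ * ∑ y ∈ dosetFinset H (x j), repChar ρ y⁻¹) *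
          ((Nat.card H : ℂ)⁻¹ * ∑ y ∈ dosetFinset H (x j), repChar ρ y)
        = ∑ y ∈ dosetFinset H (x j), FF ρ H y⁻¹ * FF ρ H y := by
    intro j
    have hm : (interConjCard H (x j) : ℂ) ≠ 0 :=
      Nat.cast_ne_zero.mpr (interConjCard_ne_zero H (x j))
    have hA := doset_sum_eq H (x j) (fun y => repChar ρ y⁻¹)
    rw [sum_prod_char_inv ρ H (x j)] at hA
    have hB := doset_sum_eq H (x j) (repChar ρ)
    rw [sum_prod_char ρ H (x j)] at hB
    have hS := doset_sum_eq H (x j) (fun y => FF ρ H y⁻¹ * FF ρ H y)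
    rw [sum_prod_K ρ H (x j)] at hS
    have e1 : ∑ y ∈ dosetFinset H (x j), repChar ρ y⁻¹
        = (interConjCard H (x j) : ℂ)⁻¹ * ((Nat.card H : ℂ)^2 * FF ρ H (x j)⁻¹) := by
      rw [← hA, inv_mul_cancel_left₀ hm]
    have e2 : ∑ y ∈ dosetFinset H (x j), repChar ρ y
        = (interConjCard H (x j) : ℂ)⁻¹ * ((Nat.card H : ℂ)^2 * FF ρ H (x j)) := by
      rw [← hB, inv_mul_cancel_left₀ hm]
    have e3 : ∑ y ∈ dosetFinset H (x j), FF ρ H y⁻¹ * FF ρ H y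
        = (interConjCard H (x j) : ℂ)⁻¹ *
            ((Nat.card H : ℂ)^2 * (FF ρ H (x j)⁻¹ * FF ρ H (x j))) := by
      rw [← hS, inv_mul_cancel_left₀ hm]
    rw [e1, e2, e3]
    field_simp
  rw [Finset.sum_congr rfl fun j _ => hkey j]
  have hds : ∀ j : Fin s, dosetFinset H (x j)
      = Finset.univ.filter (fun g : G => (hreps g).choose = j) := by
    intro j
    ext g
    rw [dosetFinset, Set.mem_toFinset, Set.mem_setOf_eq, Finset.mem_filter]
    constructor
    · rintro hg
      exact ⟨Finset.mem_univ _, ((hreps g).choose_spec.2 j hg).symm⟩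
    · rintro ⟨-, rfl⟩
      exact (hreps g).choose_spec.1
  rw [Finset.sum_congr rfl fun j _ => by rw [hds j]]
  rw [Finset.sum_fiberwise Finset.univ (fun g : G => (hreps g).choose)
    (fun g => FF ρ H g⁻¹ * FF ρ H g)]
  exact sum_K_eq ρ H hirr
end
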